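/- Let D be a nonempty connected open subset of ℂ and let h be meromorphic on D and not constant. Then there exists a function s meromorphic on D such that s(z) = S(h)(z) for every z ∈ D at which h is analytic and h'(z) ≠ 0, and the pole order of s at every point of D is at most 2 (i.e., the meromorphic order of s at each point of D is at least −2). -/

import Mathlib

open Filter Topology Set

section SchwarzianAux

lemma myAnalyticAt_deriv {f : ℂ → ℂ} {x : ℂ} (h : AnalyticAt ℂ f x) :
    AnalyticAt ℂ (deriv f) x := by
  obtain ⟨U, hU, hUo, hxU⟩ := eventually_nhds_iff.mp h.eventually_analyticAt
  exact (AnalyticOnNhd.deriv (fun y hy => hU y hy)) x hxU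

lemma mylim {f : ℂ → ℂ} {x c : ℂ} (hc : ContinuousAt f x) (he : f =ᶠ[𝓝[≠] x] fun _ => c) :
    f x = c :=
  tendsto_nhds_unique hc.continuousWithinAt (Filter.Tendsto.congr' he.symm tendsto_const_nhds)

/-- Derivatives of functions agreeing on a punctured neighbourhood agree on it. -/
lemma myderiv_congr {f F : ℂ → ℂ} {x : ℂ} (hfg : f =ᶠ[𝓝[≠] x] F) :
    deriv f =ᶠ[𝓝[≠] x] deriv F := by
  obtain ⟨U, hU, hUo, hxU⟩ := eventually_nhds_iff.mp (eventually_nhdsWithin_iff.mp hfg)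
  rw [EventuallyEq, eventually_nhdsWithin_iff]
  filter_upwards [hUo.mem_nhds hxU] with z hz hzx
  have hev : f =ᶠ[𝓝 z] F := by
    filter_upwards [(hUo.inter isOpen_compl_singleton).mem_nhds ⟨hz, hzx⟩] with w hw
    exact hU w hw.1 hw.2
  exact hev.deriv_eq

/-- Local form of the derivative of `(z-x)^m * G z`. -/
lemma myderiv_local {f G : ℂ → ℂ} {x : ℂ} {m : ℤ} (hG : AnalyticAt ℂ G x)
    (hf : f =ᶠ[𝓝[≠] x] fun z => (z - x) ^ m * G z) :
    deriv f =ᶠ[𝓝[≠] x] fun z => (z - x) ^ (m - 1) * ((m : ℂ) * G z + (z - x) * deriv G z) := by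
  refine (myderiv_congr hf).trans ?_
  rw [EventuallyEq, eventually_nhdsWithin_iff]
  filter_upwards [hG.eventually_analyticAt] with z hGz hzx
  rw [mem_compl_iff, mem_singleton_iff] at hzx
  have h1 : HasDerivAt (fun w => (w - x) ^ m) ((m : ℂ) * (z - x) ^ (m - 1)) z := by
    simpa [Function.comp_def] using ((hasDerivAt_zpow m (z - x) (Or.inl (sub_ne_zero.2 hzx))).comp z
      ((hasDerivAt_id z).sub_const x))
  have h2 : HasDerivAt G (deriv G z) z := hGz.differentiableAt.hasDerivAt
  have := (h1.mul h2).deriv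
  erw [this]
  have hpow : (z - x) ^ m = (z - x) ^ (m - 1) * (z - x) := by
    rw [← zpow_add_one₀ (sub_ne_zero.2 hzx), sub_add_cancel]
  rw [hpow]; ring

/-- Lower bound for the order from a local form. -/
lemma myorder_ge {f G : ℂ → ℂ} {x : ℂ} {m : ℤ} (hf : MeromorphicAt f x) (hG : AnalyticAt ℂ G x)
    (heq : f =ᶠ[𝓝[≠] x] fun z => (z - x) ^ m * G z) :
    (m : WithTop ℤ) ≤ meromorphicOrderAt f x := by
  rcases eq_or_ne (meromorphicOrderAt f x) ⊤ with ho | ho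
  · simp [ho]
  obtain ⟨n, hn⟩ := WithTop.ne_top_iff_exists.mp ho
  obtain ⟨g, hg, hgx, hgeq⟩ := (meromorphicOrderAt_eq_int_iff hf).mp hn.symm
  rw [← hn, WithTop.coe_le_coe]
  by_contra hlt
  push_neg at hlt
  have key : g =ᶠ[𝓝[≠] x] fun z => (z - x) ^ (m - n) * G z := by
    rw [EventuallyEq, eventually_nhdsWithin_iff]
    rw [eventually_nhdsWithin_iff] at hgeq
    rw [EventuallyEq, eventually_nhdsWithin_iff] at heq
    filter_upwards [hgeq, heq] with z h1 h2 hzx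
    rw [mem_compl_iff, mem_singleton_iff] at hzx
    have hzx' : z - x ≠ 0 := sub_ne_zero.2 hzx
    have : (z - x) ^ n * g z = (z - x) ^ m * G z := by
      rw [← h2 hzx, h1 hzx, smul_eq_mul]
    have hm : (z - x) ^ m = (z - x) ^ n * (z - x) ^ (m - n) := by
      rw [← zpow_add₀ hzx']; ring_nf
    rw [hm, mul_assoc] at this
    exact mul_left_cancel₀ (zpow_ne_zero n hzx') this
  have hgx0 : g x = 0 := by
    have t1 : Tendsto g (𝓝[≠] x) (𝓝 (g x)) :=
      hg.continuousAt.continuousWithinAt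
    have t2 : Tendsto (fun z => (z - x) ^ (m - n) * G z) (𝓝[≠] x) (𝓝 0) := by
      have hk : (0:ℤ) < m - n := by omega
      have hev : (fun z => (z - x) ^ (m - n).toNat * G z) =ᶠ[𝓝 x]
          (fun z => (z - x) ^ (m - n) * G z) := by
        filter_upwards with z
        rw [← zpow_natCast, Int.toNat_of_nonneg hk.le]
      have tc : Tendsto (fun z => (z - x) ^ (m - n).toNat * G z) (𝓝 x) (𝓝 0) := by
        have c1 : ContinuousAt (fun z => (z - x) ^ (m - n).toNat * G z) x :=
          ((continuousAt_id.sub continuousAt_const).pow _).mul hG.continuousAt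
        have h0 : (x - x) ^ (m - n).toNat * G x = 0 := by
          rw [sub_self, zero_pow (by omega : (m - n).toNat ≠ 0), zero_mul]
        have tc' := c1.tendsto
        rwa [h0] at tc'
      exact (tc.congr' hev).mono_left nhdsWithin_le_nhds
    exact tendsto_nhds_unique (t1.congr' key) t2
  exact hgx hgx0

/-- Derivatives of meromorphic functions are meromorphic. -/
lemma mymero_deriv {f : ℂ → ℂ} {x : ℂ} (hf : MeromorphicAt f x) :
    MeromorphicAt (deriv f) x := by
  obtain ⟨n, G, hG, hfe⟩ := MeromorphicAt.iff_eventuallyEq_zpow_smul_analyticAt.mp hf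
  have hfe' : f =ᶠ[𝓝[≠] x] fun z => (z - x) ^ n * G z := by
    filter_upwards [hfe] with z hz; simpa [smul_eq_mul] using hz
  have hd := myderiv_local hG hfe'
  refine MeromorphicAt.iff_eventuallyEq_zpow_smul_analyticAt.mpr ⟨n - 1,
    fun z => (n : ℂ) * G z + (z - x) * deriv G z,
    (analyticAt_const.mul hG).add
      ((analyticAt_id.sub analyticAt_const).mul (myAnalyticAt_deriv hG)), ?_⟩
  filter_upwards [hd] with z hz; simpa [smul_eq_mul] using hz

/-- A meromorphic function on an open preconnected set which vanishes on a punctured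
neighbourhood of one point vanishes on a punctured neighbourhood of every point. -/
lemma myclopen {f : ℂ → ℂ} {D : Set ℂ} (hDo : IsOpen D) (hDc : IsPreconnected D)
    (hf : MeromorphicOn f D) {x₀ : ℂ} (hx₀ : x₀ ∈ D) (h0 : f =ᶠ[𝓝[≠] x₀] 0) :
    ∀ x ∈ D, f =ᶠ[𝓝[≠] x] 0 := by
  set T : Set ℂ := {y : ℂ | f =ᶠ[𝓝[≠] y] (0 : ℂ → ℂ)} with hT
  have hTo : IsOpen T := by
    rw [isOpen_iff_forall_mem_open]
    intro y hy
    obtain ⟨U, hU, hUo, hyU⟩ := eventually_nhds_iff.mp (eventually_nhdsWithin_iff.mp hy)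
    refine ⟨U, fun w hw => ?_, hUo, hyU⟩
    rcases eq_or_ne w y with rfl | hwy
    · exact hy
    · rw [hT, mem_setOf_eq, EventuallyEq, eventually_nhdsWithin_iff]
      filter_upwards [(hUo.inter isOpen_compl_singleton).mem_nhds ⟨hw, hwy⟩] with z hz _
      exact hU z hz.1 hz.2
  have hvex : ∀ x ∈ D, x ∉ T → ∃ V : Set ℂ, IsOpen V ∧ x ∈ V ∧ ∀ y ∈ V, y ∉ T := by
    intro x hxD hxT
    have hm : MeromorphicAt f x := hf x hxD
    have ho : meromorphicOrderAt f x ≠ ⊤ := fun htop => hxT (meromorphicOrderAt_eq_top_iff.mp htop)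
    obtain ⟨n, hn⟩ := WithTop.ne_top_iff_exists.mp ho
    obtain ⟨g, hg, hgx, hgeq⟩ := (meromorphicOrderAt_eq_int_iff hm).mp hn.symm
    rw [eventually_nhdsWithin_iff] at hgeq
    obtain ⟨U, hU, hUo, hxU⟩ := eventually_nhds_iff.mp
      (hgeq.and (hg.continuousAt.eventually_ne hgx))
    refine ⟨U, hUo, hxU, ?_⟩
    intro y hyU hyT
    have hmem : ∀ᶠ z in 𝓝[≠] y, z ∈ U ∧ z ≠ x := by
      rcases eq_or_ne y x with rfl | hyx
      · refine Filter.inter_mem (nhdsWithin_le_nhds (hUo.mem_nhds hyU)) ?_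
        exact self_mem_nhdsWithin
      · apply nhdsWithin_le_nhds
        filter_upwards [(hUo.inter isOpen_compl_singleton).mem_nhds ⟨hyU, hyx⟩] with z hz
        exact ⟨hz.1, hz.2⟩
    have hyT' : ∀ᶠ z in 𝓝[≠] y, f z = 0 := hyT
    obtain ⟨z, hz0, hzU, hzx⟩ := (hyT'.and hmem).exists
    have := (hU z hzU).1 hzx
    rw [hz0] at this
    have hne : (z - x) ^ n • g z ≠ 0 :=
      smul_ne_zero (zpow_ne_zero n (sub_ne_zero.2 hzx)) (hU z hzU).2
    exact hne this.symm
  set v : Set ℂ := {y : ℂ | ∃ V : Set ℂ, IsOpen V ∧ y ∈ V ∧ ∀ w ∈ V, w ∉ T} with hv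
  have hvo : IsOpen v := by
    rw [isOpen_iff_forall_mem_open]
    rintro y ⟨V, hVo, hyV, hVT⟩
    exact ⟨V, fun w hw => ⟨V, hVo, hw, hVT⟩, hVo, hyV⟩
  have hvT : v ∩ T = ∅ := by
    ext y
    simp only [mem_inter_iff, mem_empty_iff_false, iff_false, not_and]
    rintro ⟨V, hVo, hyV, hVT⟩
    exact hVT y hyV
  have hcover : D ⊆ T ∪ v := by
    intro x hxD
    by_cases hxT : x ∈ T
    · exact Or.inl hxT
    · obtain ⟨V, hVo, hxV, hVT⟩ := hvex x hxD hxT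
      exact Or.inr ⟨V, hVo, hxV, hVT⟩
  intro x hxD
  by_contra hxT
  obtain ⟨V, hVo, hxV, hVT⟩ := hvex x hxD hxT
  obtain ⟨z, hzD, hzT, hzv⟩ := hDc T v hTo hvo hcover ⟨x₀, hx₀, h0⟩ ⟨x, hxD, V, hVo, hxV, hVT⟩
  rw [← mem_empty_iff_false z, ← hvT]
  exact ⟨hzv, hzT⟩

/-- If `h` is analytic at `y` and `deriv h` vanishes on a punctured neighbourhood of `y`,
then `h` is constant near `y`. -/
lemma myconst {f : ℂ → ℂ} {y : ℂ} (hf : AnalyticAt ℂ f y)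
    (hd : deriv f =ᶠ[𝓝[≠] y] 0) : f =ᶠ[𝓝 y] fun _ => f y := by
  have hd0 : deriv f y = 0 := mylim (myAnalyticAt_deriv hf).continuousAt hd
  obtain ⟨U, hU, hUo, hyU⟩ := eventually_nhds_iff.mp hf.eventually_analyticAt
  obtain ⟨V, hV, hVo, hyV⟩ := eventually_nhds_iff.mp (eventually_nhdsWithin_iff.mp hd)
  obtain ⟨ε, hε, hball⟩ := Metric.isOpen_iff.mp (hUo.inter hVo) y ⟨hyU, hyV⟩
  have hder0 : ∀ z ∈ Metric.ball y ε, deriv f z = 0 := by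
    intro z hz
    rcases eq_or_ne z y with rfl | hzy
    · exact hd0
    · exact hV z (hball hz).2 hzy
  have hdiff : DifferentiableOn ℂ f (Metric.ball y ε) :=
    fun z hz => ((hU z (hball hz).1).differentiableAt).differentiableWithinAt
  have hfd : ∀ z ∈ Metric.ball y ε, fderivWithin ℂ f (Metric.ball y ε) z = 0 := by
    intro z hz
    rw [fderivWithin_of_isOpen Metric.isOpen_ball hz, ← toSpanSingleton_deriv, hder0 z hz]
    ext v; simp
  filter_upwards [Metric.ball_mem_nhds y hε] with z hz
  exact (convex_ball y ε).is_const_of_fderivWithin_eq_zero hdiff hfd hz (Metric.mem_ball_self hε)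

/-- The derivative of a nonconstant meromorphic function on an open connected set does not
vanish identically near any point. -/
lemma mynotzero {D : Set ℂ} (hDo : IsOpen D) (hDc : IsPreconnected D) {h : ℂ → ℂ}
    (hmero : MeromorphicOn h D)
    (hnc : ¬ ∃ c : ℂ, ∀ z ∈ D, AnalyticAt ℂ h z → h z = c) :
    ∀ x ∈ D, ¬ (deriv h =ᶠ[𝓝[≠] x] 0) := by
  intro x hx hcon
  have hDmero : MeromorphicOn (deriv h) D := fun z hz => mymero_deriv (hmero z hz)
  have hall := myclopen hDo hDc hDmero hx hcon
  obtain ⟨y, hyA, hyD⟩ := ((hmero x hx).eventually_analyticAt.and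
    ((hDo.eventually_mem hx).filter_mono nhdsWithin_le_nhds)).exists
  set c := h y with hc
  have hconst : h =ᶠ[𝓝 y] fun _ => c := myconst hyA (hall y hyD)
  have hF : MeromorphicOn (fun z => h z - c) D :=
    fun z hz => (hmero z hz).sub (MeromorphicAt.const c z)
  have hF0 : (fun z => h z - c) =ᶠ[𝓝[≠] y] 0 := by
    apply Filter.EventuallyEq.filter_mono _ nhdsWithin_le_nhds
    filter_upwards [hconst] with z hz
    simp [hz]
  have hFall := myclopen hDo hDc hF hyD hF0
  apply hnc
  refine ⟨c, fun z hzD hzA => ?_⟩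
  have hev : h =ᶠ[𝓝[≠] z] fun _ => c := by
    filter_upwards [hFall z hzD] with w hw
    exact sub_eq_zero.mp hw
  exact mylim hzA.continuousAt hev

end SchwarzianAux

/-- The Schwarz derivative `S(f) = f'''/f' - (3/2)(f''/f')²`. -/
noncomputable def schwarzian (f : ℂ → ℂ) (z : ℂ) : ℂ :=
  iteratedDeriv 3 f z / deriv f z - (3 / 2) * (iteratedDeriv 2 f z / deriv f z) ^ 2

/-- The Schwarz derivative of a nonconstant meromorphic function extends to a meromorphic
function whose poles all have order at most 2. -/
theorem schwarzian_meromorphic_with_at_most_double_poles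
    (D : Set ℂ) (hD : D.Nonempty) (hDo : IsOpen D) (hDc : IsConnected D)
    (h : ℂ → ℂ) (hmero : MeromorphicOn h D)
    (hnc : ¬ ∃ c : ℂ, ∀ z ∈ D, AnalyticAt ℂ h z → h z = c) :
    ∃ s : ℂ → ℂ, ∃ hs : MeromorphicOn s D,
      (∀ z ∈ D, AnalyticAt ℂ h z → deriv h z ≠ 0 → s z = schwarzian h z) ∧
      ∀ z : ℂ, ∀ hz : z ∈ D, ((-2 : ℤ) : WithTop ℤ) ≤ meromorphicOrderAt s z := by
  set g : ℂ → ℂ := fun z => deriv (deriv h) z / deriv h z with hgdef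
  set s : ℂ → ℂ := fun z => deriv g z - g z ^ 2 / 2 with hsdef
  have hkey : ∀ x ∈ D, ∃ Q : ℂ → ℂ, AnalyticAt ℂ Q x ∧
      s =ᶠ[𝓝[≠] x] fun z => (z - x) ^ (-2 : ℤ) * Q z := by
    intro x hx
    have hw : MeromorphicAt (deriv h) x := mymero_deriv (hmero x hx)
    have hwo : meromorphicOrderAt (deriv h) x ≠ ⊤ := fun htop =>
      mynotzero hDo hDc.isPreconnected hmero hnc x hx (meromorphicOrderAt_eq_top_iff.mp htop)
    obtain ⟨m, hm⟩ := WithTop.ne_top_iff_exists.mp hwo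
    obtain ⟨W, hW, hWx, hWeq⟩ := (meromorphicOrderAt_eq_int_iff hw).mp hm.symm
    have hWeq' : deriv h =ᶠ[𝓝[≠] x] fun z => (z - x) ^ m * W z := by
      filter_upwards [hWeq] with z hz; simpa [smul_eq_mul] using hz
    have hu := myderiv_local hW hWeq'
    set N : ℂ → ℂ := fun z => (m : ℂ) * W z + (z - x) * deriv W z with hNdef
    have hN : AnalyticAt ℂ N x := (analyticAt_const.mul hW).add
      ((analyticAt_id.sub analyticAt_const).mul (myAnalyticAt_deriv hW))
    set P : ℂ → ℂ := fun z => N z / W z with hPdef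
    have hP : AnalyticAt ℂ P x := hN.div hW hWx
    have hg : g =ᶠ[𝓝[≠] x] fun z => (z - x) ^ (-1 : ℤ) * P z := by
      rw [EventuallyEq, eventually_nhdsWithin_iff]
      rw [EventuallyEq, eventually_nhdsWithin_iff] at hu hWeq'
      filter_upwards [hu, hWeq', hW.continuousAt.eventually_ne hWx] with z h1 h2 hWz hzx
      rw [mem_compl_iff, mem_singleton_iff] at hzx
      have hzx' : z - x ≠ 0 := sub_ne_zero.2 hzx
      have e1 : g z = deriv (deriv h) z / deriv h z := rfl
      rw [e1, h1 hzx, h2 hzx, hPdef]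
      have hzm : (z - x) ^ m ≠ 0 := zpow_ne_zero m hzx'
      rw [show (m - 1 : ℤ) = m + (-1) by ring, zpow_add₀ hzx', zpow_neg_one]
      field_simp
      ring
    have hdg := myderiv_local hP hg
    refine ⟨fun z => ((-1 : ℤ) : ℂ) * P z + (z - x) * deriv P z - P z ^ 2 / 2,
      (((analyticAt_const.mul hP).add
        ((analyticAt_id.sub analyticAt_const).mul (myAnalyticAt_deriv hP))).sub
        ((hP.pow 2).div analyticAt_const two_ne_zero)), ?_⟩
    rw [EventuallyEq, eventually_nhdsWithin_iff]
    rw [EventuallyEq, eventually_nhdsWithin_iff] at hdg hg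
    filter_upwards [hdg, hg] with z h1 h2 hzx
    rw [mem_compl_iff, mem_singleton_iff] at hzx
    have hzx' : z - x ≠ 0 := sub_ne_zero.2 hzx
    have e1 : s z = deriv g z - g z ^ 2 / 2 := rfl
    rw [e1, h1 hzx, h2 hzx]
    rw [show (-1 - 1 : ℤ) = -2 by ring]
    have e2 : (z - x) ^ (-1 : ℤ) = (z - x)⁻¹ := zpow_neg_one _
    have e3 : (z - x) ^ (-2 : ℤ) = ((z - x) ^ 2)⁻¹ := by
      rw [zpow_neg, zpow_two]; norm_num [sq]
    rw [e2, e3]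
    field_simp
  have hs : MeromorphicOn s D := by
    intro x hx
    obtain ⟨Q, hQ, hQe⟩ := hkey x hx
    exact MeromorphicAt.iff_eventuallyEq_zpow_smul_analyticAt.mpr ⟨-2, Q, hQ,
      by filter_upwards [hQe] with z hz; simpa [smul_eq_mul] using hz⟩
  refine ⟨s, hs, ?_, ?_⟩
  · intro z hz hA hd
    have h1 : AnalyticAt ℂ (deriv h) z := myAnalyticAt_deriv hA
    have h2 : AnalyticAt ℂ (deriv (deriv h)) z := myAnalyticAt_deriv h1
    have e1 : s z = deriv g z - g z ^ 2 / 2 := rfl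
    have e2 : deriv g z = (deriv (deriv (deriv h)) z * deriv h z -
        deriv (deriv h) z * deriv (deriv h) z) / deriv h z ^ 2 := by
      rw [hgdef]
      exact deriv_div h2.differentiableAt h1.differentiableAt hd
    have e3 : g z = deriv (deriv h) z / deriv h z := rfl
    rw [e1, e2, e3]
    rw [schwarzian, show (3 : ℕ) = 2 + 1 by rfl, show (2 : ℕ) = 1 + 1 by rfl,
      iteratedDeriv_succ, iteratedDeriv_succ, iteratedDeriv_one]
    field_simp
    simp only [Nat.reduceAdd]; field_simp; ring
  · intro z hz
    obtain ⟨Q, hQ, hQe⟩ := hkey z hz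
    exact myorder_ge (hs z hz) hQ hQe
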